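/- Given a finite linear recursive specification E over ACPτ whose equations are X_i = e_{i1}·X_{i1} + … + e_{ik_i}·X_{ik_i} + e'_{i1} + … + e'_{il_i} with all actions in AA, the linear recursive specification E' over BTApcspc with equations X_i = ac(e_{i1},…,e_{ik_i},e'_{i1},…,e'_{il_i})[k_i+l_i](X_{i1},…,X_{ik_i},S,…,S) (with l_i copies of S) satisfies ⌈⟨X|E'⟩⌉ = ⟨X|E⟩ for all variables X of E. -/

import Mathlib

/-- A model of basic thread algebra with postconditional switching (BTApcs) over
a set `A` of basic actions.  Actions are elements of `Option A`, with `none`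
standing for the internal action `τ`.  `pcc a x y` interprets postconditional
composition `x ⊴ a ⊵ y` and `switch a k xs` interprets the `k`-ary
postconditional switch `a[k](x₁,…,x_k)`. -/
structure ThreadModel (A : Type) where
  Thr : Type
  D : Thr
  S : Thr
  pcc : Option A → Thr → Thr → Thr
  switch : Option A → (k : ℕ) → (Fin k → Thr) → Thr

namespace ThreadModel

variable {A : Type} (M : ThreadModel A)

/-- `M.Res p q` : `q` is a state (residual thread) of `p`; the least relation
with `p ∈ Res(p)` that is closed under taking components of postconditional
compositions and switches occurring in `Res(p)`. -/
inductive Res : M.Thr → M.Thr → Prop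
  | refl (p : M.Thr) : Res p p
  | pccL {p : M.Thr} {a : Option A} {q r : M.Thr} :
      Res p (M.pcc a q r) → Res p q
  | pccR {p : M.Thr} {a : Option A} {q r : M.Thr} :
      Res p (M.pcc a q r) → Res p r
  | sw {p : M.Thr} {a : Option A} {k : ℕ} {ps : Fin k → M.Thr} (i : Fin k) :
      Res p (M.switch a k ps) → Res p (ps i)

/-- A thread `p` is regular over a set `B'` of actions if its set of residual
threads is finite and every postconditional composition or switch among its
residual threads uses only actions from `B'`. -/
def RegularOver (p : M.Thr) (B' : Set (Option A)) : Prop :=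
  {q | M.Res p q}.Finite ∧
  (∀ (a : Option A) (q r : M.Thr), M.Res p q → M.Res p r →
      M.Res p (M.pcc a q r) → a ∈ B') ∧
  (∀ (a : Option A) (k : ℕ) (ps : Fin k → M.Thr), (∀ i, M.Res p (ps i)) →
      M.Res p (M.switch a k ps) → a ∈ B')

end ThreadModel

/-- Right-hand sides of a linear recursive specification over BTApcs with
variables `X_0, …, X_{m-1}`: each right-hand side is `D`, `S`, a postconditional
composition `Y ⊴ a ⊵ Z` of variables, or a postconditional switch
`a[k](X₁,…,X_k)` of variables. -/
inductive LinRHS (A : Type) (m : ℕ) : Type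
  | D : LinRHS A m
  | S : LinRHS A m
  | pcc (a : Option A) (i j : Fin m) : LinRHS A m
  | switch (a : Option A) (k : ℕ) (f : Fin k → Fin m) : LinRHS A m

/-- Evaluation of a linear right-hand side in a thread model under an assignment
of threads to the variables. -/
def LinRHS.eval {A : Type} {m : ℕ} (M : ThreadModel A)
    (sol : Fin m → M.Thr) : LinRHS A m → M.Thr
  | .D => M.D
  | .S => M.S
  | .pcc a i j => M.pcc a (sol i) (sol j)
  | .switch a k f => M.switch a k fun i => sol (f i)

/-- The set of basic actions occurring in a linear right-hand side. -/
def LinRHS.acts {A : Type} {m : ℕ} : LinRHS A m → Set (Option A)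
  | .pcc a _ _ => {a}
  | .switch a _ _ => {a}
  | _ => ∅

/-- `sol` is a solution of the finite linear recursive specification `E`. -/
def IsSolution {A : Type} {m : ℕ} (M : ThreadModel A)
    (E : Fin m → LinRHS A m) (sol : Fin m → M.Thr) : Prop :=
  ∀ i, sol i = (E i).eval M sol

/-- A model of ACP with abstraction (ACPτ) over a set `A` of atomic actions,
restricted to the constants and operators needed here.  `atom` interprets the
atomic action constants, with `atom none` the silent step `τ`; `delta` is
deadlock `δ`; `alt` is alternative composition `+` and `seq` is sequential
composition `·`. -/
structure ProcModel (A : Type) where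
  Proc : Type
  atom : Option A → Proc
  delta : Proc
  alt : Proc → Proc → Proc
  seq : Proc → Proc → Proc

namespace ProcModel

variable {A : Type} (N : ProcModel A)

/-- `N.Sub p q` : `q` is a state (subprocess) of `p`; the least relation with
`p ∈ Sub(p)` that is closed under: if `e·q ∈ Sub(p)` then `q ∈ Sub(p)`, and if
`e·q + r ∈ Sub(p)` then `q ∈ Sub(p)`. -/
inductive Sub : N.Proc → N.Proc → Prop
  | refl (p : N.Proc) : Sub p p
  | seqStep {p : N.Proc} {e : Option A} {q : N.Proc} :
      Sub p (N.seq (N.atom e) q) → Sub p q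
  | altStep {p : N.Proc} {e : Option A} {q r : N.Proc} :
      Sub p (N.alt (N.seq (N.atom e) q) r) → Sub p q

/-- A process `p` is regular over a set `A'` of actions if its set of
subprocesses is finite and the actions occurring in these decompositions all
belong to `A'`. -/
def RegularOver (p : N.Proc) (A' : Set (Option A)) : Prop :=
  {q | N.Sub p q}.Finite ∧
  (∀ (e : Option A) (q : N.Proc), N.Sub p q →
      N.Sub p (N.seq (N.atom e) q) → e ∈ A') ∧
  (∀ (e : Option A) (q r : N.Proc), N.Sub p q → N.Sub p r →
      N.Sub p (N.alt (N.seq (N.atom e) q) r) → e ∈ A')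

end ProcModel

/-- Linear ACPτ terms over variables `X_0, …, X_{m-1}`: built by alternative
composition from `δ`, atomic actions `e`, and prefixes `e · X`. -/
inductive PLin (A : Type) (m : ℕ) : Type
  | delta : PLin A m
  | atom (e : Option A) : PLin A m
  | pre (e : Option A) (X : Fin m) : PLin A m
  | alt (t u : PLin A m) : PLin A m

/-- Evaluation of a linear term in a process model under an assignment of
processes to the variables. -/
def PLin.eval {A : Type} {m : ℕ} (N : ProcModel A)
    (sol : Fin m → N.Proc) : PLin A m → N.Proc
  | .delta => N.delta
  | .atom e => N.atom e
  | .pre e X => N.seq (N.atom e) (sol X)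
  | .alt t u => N.alt (t.eval N sol) (u.eval N sol)

/-- The set of atomic actions occurring in a linear term. -/
def PLin.acts {A : Type} {m : ℕ} : PLin A m → Set (Option A)
  | .delta => ∅
  | .atom e => {e}
  | .pre e _ => {e}
  | .alt t u => t.acts ∪ u.acts

/-- `sol` is a solution of the finite linear recursive specification `E` over
ACPτ. -/
def IsPSolution {A : Type} {m : ℕ} (N : ProcModel A)
    (E : Fin m → PLin A m) (sol : Fin m → N.Proc) : Prop :=
  ∀ i, sol i = (E i).eval N sol

/-- Basic instructions / basic actions of PGAmrpc and BTApcspc: either a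
program–service (thread–service) interaction instruction `f.m` with focus `f`
and method `m`, or a process construction instruction `ac(e₁,…,e_n)` given by a
list of atomic actions from `AA` (here: elements of the type `E`). -/
abbrev BInstr (F Mth E : Type) : Type := (F × Mth) ⊕ (List E)

/-- Atomic actions of the ACPτ model used for process extraction: the atomic
actions `AA` (elements of `E`) together with the special internal atomic action
`i` (`Sum.inr ()`). -/
abbrev PAtom (E : Type) : Type := E ⊕ Unit

/-- Alternative composition of a list of processes (with `δ` for the empty
list). -/
def ProcModel.bigAlt {A : Type} (N : ProcModel A) (l : List N.Proc) : N.Proc :=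
  l.foldr N.alt N.delta

/-- Some laws of ACPτ that hold in any of its models: commutativity,
associativity of `+`, the axiom `x + δ = x`, and the law `x · τ = x`. -/
structure ProcModel.ACPLaws {A : Type} (N : ProcModel A) : Prop where
  altComm : ∀ x y, N.alt x y = N.alt y x
  altAssoc : ∀ x y z, N.alt (N.alt x y) z = N.alt x (N.alt y z)
  altDelta : ∀ x, N.alt x N.delta = x
  seqTau : ∀ x, N.seq x (N.atom none) = x

/-- The process extraction operation `⌈_⌉` from threads of a model `M` of
BTApcspc to processes of a model `N` of ACPτ, packaged with its defining
equations on the relevant constants and operators (`⌈S⌉` is the abstraction of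
the special termination action, i.e. `τ`; `⌈D⌉ = i·δ`; postconditional
compositions and switches over `τ` and over process construction actions are
translated as in the defining table, padding with `i·δ` or truncating as
needed). -/
structure ProcExtraction (F Mth E : Type) (M : ThreadModel (BInstr F Mth E))
    (N : ProcModel (PAtom E)) where
  pextr : M.Thr → N.Proc
  eq_S : pextr M.S = N.atom none
  eq_D : pextr M.D = N.seq (N.atom (some (Sum.inr ()))) N.delta
  eq_pcc_tau : ∀ x y : M.Thr,
      pextr (M.pcc none x y) =
        N.seq (N.atom (some (Sum.inr ())))
          (N.seq (N.atom (some (Sum.inr ()))) (pextr x))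
  eq_pcc_ac : ∀ (es : List E) (x y : M.Thr),
      pextr (M.pcc (some (Sum.inr es)) x y) =
        N.bigAlt (es.mapIdx fun j e =>
          N.seq (N.atom (some (Sum.inl e))) (if j = 0 then pextr x else pextr y))
  eq_switch_tau : ∀ (k : ℕ) (h : 0 < k) (ts : Fin k → M.Thr),
      pextr (M.switch none k ts) =
        N.seq (N.atom (some (Sum.inr ())))
          (N.seq (N.atom (some (Sum.inr ()))) (pextr (ts ⟨0, h⟩)))
  eq_switch_ac : ∀ (es : List E) (k : ℕ) (ts : Fin k → M.Thr),
      pextr (M.switch (some (Sum.inr es)) k ts) =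
        N.bigAlt (es.mapIdx fun j e =>
          N.seq (N.atom (some (Sum.inl e)))
            (if h : j < k then pextr (ts ⟨j, h⟩)
             else N.seq (N.atom (some (Sum.inr ()))) N.delta))

/-- Translating a finite linear ACPτ specification
`X_i = e_{i1}·X_{i1} + … + e_{ik_i}·X_{ik_i} + e'_{i1} + … + e'_{il_i}`
into the BTApcspc specification
`X_i = ac(e_{i1},…,e_{ik_i},e'_{i1},…,e'_{il_i})[k_i+l_i](X_{i1},…,X_{ik_i},S,…,S)`
(with `l_i` copies of `S`): the process extraction of the solution of the latter
is the solution of the former, `⌈⟨X|E'⟩⌉ = ⟨X|E⟩` for all variables `X`. -/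

lemma mapIdx_ofFn' {α β : Type*} {m : ℕ} (g : Fin m → α) (f : ℕ → α → β) :
    List.mapIdx f (List.ofFn g) = List.ofFn (fun j : Fin m => f j (g j)) := by
  apply List.ext_getElem
  · simp
  · intro i h1 h2
    simp

theorem pextr_of_translated_spec_is_solution
    {F Mth E : Type} (M : ThreadModel (BInstr F Mth E))
    (N : ProcModel (PAtom E)) (hN : N.ACPLaws)
    (pext : ProcExtraction F Mth E M N)
    (n : ℕ) (k l : Fin n → ℕ)
    (e : ∀ i : Fin n, Fin (k i) → E) (tgt : ∀ i : Fin n, Fin (k i) → Fin n)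
    (ex : ∀ i : Fin n, Fin (l i) → E)
    -- `solP` is a solution of `E` over ACPτ:
    (solP : Fin n → N.Proc)
    (hsolP : ∀ i, solP i =
      N.bigAlt
        ((List.ofFn fun j : Fin (k i) =>
            N.seq (N.atom (some (Sum.inl (e i j)))) (solP (tgt i j))) ++
         (List.ofFn fun j : Fin (l i) => N.atom (some (Sum.inl (ex i j))))))
    -- `E` has a unique solution:
    (hUniqueP : ∀ solP' : Fin n → N.Proc,
      (∀ i, solP' i =
        N.bigAlt
          ((List.ofFn fun j : Fin (k i) =>
              N.seq (N.atom (some (Sum.inl (e i j)))) (solP' (tgt i j))) ++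
           (List.ofFn fun j : Fin (l i) => N.atom (some (Sum.inl (ex i j)))))) →
      solP' = solP)
    -- `solT` is a solution of the translated specification `E'` over BTApcspc:
    (solT : Fin n → M.Thr)
    (hsolT : ∀ i, solT i =
      M.switch (some (Sum.inr (List.ofFn (e i) ++ List.ofFn (ex i))))
        (k i + l i)
        (fun j => if h : (j : ℕ) < k i then solT (tgt i ⟨j, h⟩) else M.S)) :
    ∀ i, pext.pextr (solT i) = solP i := by
  have key : (fun i => pext.pextr (solT i)) = solP := by
    apply hUniqueP
    intro i
    conv_lhs => rw [hsolT i]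
    rw [pext.eq_switch_ac]
    congr 1
    rw [List.mapIdx_append, mapIdx_ofFn', mapIdx_ofFn']
    congr 1
    · congr 1
      funext j
      have hjk : (j : ℕ) < k i := j.isLt
      have hjkl : (j : ℕ) < k i + l i := Nat.lt_of_lt_of_le hjk (Nat.le_add_right _ _)
      rw [dif_pos hjkl]
      simp only [dif_pos hjk]
    · congr 1
      funext j
      have hlen : (List.ofFn (e i)).length = k i := List.length_ofFn
      rw [hlen]
      have hjkl : (j : ℕ) + k i < k i + l i := by omega
      rw [dif_pos hjkl]
      have : ¬ ((j : ℕ) + k i < k i) := by omega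
      rw [dif_neg this, pext.eq_S, hN.seqTau]
  intro i
  exact congrFun key i
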